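/- If V is an F_q-subspace of F_{q^n} (strictly F_q-linear, with some 1-dimensional intersection V ∩ αV for α ∉ F_q), and δ is a root of an irreducible polynomial of degree > 2 over F_{q^n}, then V + δV = {v_1 + δ v_2 : v_1, v_2 ∈ V} is not a Sidon space: there exists α ∈ F_{q^n} \ F_q with dim_{F_q}((V + δV) ∩ α(V + δV)) ≥ 2. -/
import Mathlib


/-- The multiplicative coset `a·F_q` inside `L`. -/
def qcoset (K : Type*) {L : Type*} [Field K] [Field L] [Algebra K L] (a : L) : Set L :=
  Set.range fun x : K => algebraMap K L x * a

/-- `V ⊆ L` is a Sidon space (as a set): for nonzero `a,b,c,d ∈ V` with `ab = cd`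
we have `{aF_q, bF_q} = {cF_q, dF_q}`. -/
def IsSidonSet (K : Type*) {L : Type*} [Field K] [Field L] [Algebra K L] (V : Set L) : Prop :=
  ∀ a ∈ V, ∀ b ∈ V, ∀ c ∈ V, ∀ d ∈ V,
    a ≠ 0 → b ≠ 0 → c ≠ 0 → d ≠ 0 → a * b = c * d →
      ({qcoset K a, qcoset K b} : Set (Set L)) = {qcoset K c, qcoset K d}

/-- `f` is scattered: `f(a)/a = f(b)/b` for nonzero `a,b` forces `F_q`-proportionality. -/
def IsScattered (K : Type*) {M : Type*} [Field K] [Field M] [Algebra K M] (f : M → M) : Prop :=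
  ∀ a b : M, a ≠ 0 → b ≠ 0 → f a * b = f b * a → ∃ c : K, b = algebraMap K M c * a

/-- `f` is a Sidon space polynomial: `S_{x₀,f} ∩ S_{x₁,f} = F_q` for all
non-`F_q`-proportional `x₀, x₁`. -/
def IsSidonPoly (K : Type*) {M : Type*} [Field K] [Field M] [Algebra K M] (f : M → M) : Prop :=
  ∀ x₀ x₁ : M,
    ¬ (∃ c : K, x₁ = algebraMap K M c * x₀ ∨ x₀ = algebraMap K M c * x₁) →
    {l : M | f (l * x₀) = l * f x₀} ∩ {l : M | f (l * x₁) = l * f x₁}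
      = Set.range (algebraMap K M)

/-- `V + δV` is never a Sidon space: some `α ∈ F_{q^n} \ F_q` gives an
intersection of dimension at least `2`. -/
theorem stmt_16 {K L E : Type*} [Field K] [Field L] [Field E]
    [Algebra K L] [Algebra L E] [Algebra K E] [IsScalarTower K L E]
    [Fintype K] [Fintype L] [Fintype E]
    (V : Submodule K L)
    (hV : ∃ α : L, α ∉ Set.range (algebraMap K L) ∧
      Module.finrank K ↥(V ⊓ V.map (LinearMap.mulLeft K α)) = 1)
    (δ : E) (hδ : Algebra.adjoin L {δ} = ⊤) (hdeg : 2 < Module.finrank L E) :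
    ¬ IsSidonSet K ((Submodule.span K {x : E | ∃ v₁ ∈ V, ∃ v₂ ∈ V,
        x = algebraMap L E v₁ + δ * algebraMap L E v₂} : Submodule K E) : Set E) ∧
    ∃ α : L, α ∉ Set.range (algebraMap K L) ∧
      2 ≤ Module.finrank K
        ↥((Submodule.span K {x : E | ∃ v₁ ∈ V, ∃ v₂ ∈ V,
            x = algebraMap L E v₁ + δ * algebraMap L E v₂}) ⊓
          (Submodule.span K {x : E | ∃ v₁ ∈ V, ∃ v₂ ∈ V,
            x = algebraMap L E v₁ + δ * algebraMap L E v₂}).map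
              (LinearMap.mulLeft K (algebraMap L E α))) := by
  obtain ⟨α, hα, hdim⟩ := hV
  have injLE : Function.Injective (algebraMap L E) := (algebraMap L E).injective
  -- δ is not in the image of L
  have hδL : δ ∉ Set.range (algebraMap L E) := by
    rintro ⟨l, rfl⟩
    have h1 : Algebra.adjoin L {algebraMap L E l} ≤ ⊥ :=
      Algebra.adjoin_le (by simp [Algebra.mem_bot])
    rw [hδ] at h1
    have hbt : (⊥ : Subalgebra L E) = ⊤ := le_antisymm le_top h1
    have := Subalgebra.bot_eq_top_iff_finrank_eq_one.mp hbt
    omega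
  have hδ0 : δ ≠ 0 := fun h => hδL ⟨0, by simp [h]⟩
  have hα0 : α ≠ 0 := fun h => hα ⟨0, by simp [h]⟩
  -- pick t spanning the 1-dimensional intersection
  obtain ⟨t, ht, ht0⟩ : ∃ t ∈ V ⊓ V.map (LinearMap.mulLeft K α), t ≠ 0 := by
    have hne : V ⊓ V.map (LinearMap.mulLeft K α) ≠ ⊥ := by
      intro h; rw [h] at hdim; simp at hdim
    obtain ⟨x, hx, hx0⟩ := (Submodule.ne_bot_iff _).mp hne
    exact ⟨x, hx, hx0⟩
  obtain ⟨htV, htm⟩ := ht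
  obtain ⟨t', ht'V, ht'eq⟩ := htm
  have ht'eq : α * t' = t := ht'eq
  have ht'0 : t' ≠ 0 := by rintro rfl; simp at ht'eq; exact ht0 ht'eq.symm
  set S : Set E := {x : E | ∃ v₁ ∈ V, ∃ v₂ ∈ V,
      x = algebraMap L E v₁ + δ * algebraMap L E v₂} with hS
  set W : Submodule K E := Submodule.span K S with hW
  set tE : E := algebraMap L E t with htE
  set t'E : E := algebraMap L E t' with ht'E
  have htE0 : tE ≠ 0 := fun h => ht0 (injLE (by rw [map_zero]; exact h))
  have ht'E0 : t'E ≠ 0 := fun h => ht'0 (injLE (by rw [map_zero]; exact h))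
  have hmul : algebraMap L E α * t'E = tE := by
    rw [ht'E, htE, ← map_mul, ht'eq]
  -- memberships in W
  have mem1 : tE ∈ W := Submodule.subset_span ⟨t, htV, 0, V.zero_mem, by simp [htE]⟩
  have mem2 : δ * tE ∈ W := Submodule.subset_span ⟨0, V.zero_mem, t, htV, by simp [htE]⟩
  have mem1' : t'E ∈ W := Submodule.subset_span ⟨t', ht'V, 0, V.zero_mem, by simp [ht'E]⟩
  have mem2' : δ * t'E ∈ W := Submodule.subset_span ⟨0, V.zero_mem, t', ht'V, by simp [ht'E]⟩
  -- memberships in the image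
  have memm1 : tE ∈ W.map (LinearMap.mulLeft K (algebraMap L E α)) :=
    ⟨t'E, mem1', by simpa using hmul⟩
  have memm2 : δ * tE ∈ W.map (LinearMap.mulLeft K (algebraMap L E α)) :=
    ⟨δ * t'E, mem2', by simp [LinearMap.mulLeft_apply, ← hmul]; ring⟩
  -- algebraMap K E factors through L
  have hKE : ∀ x : K, algebraMap K E x = algebraMap L E (algebraMap K L x) := fun x =>
    (IsScalarTower.algebraMap_apply K L E x)
  constructor
  · -- not a Sidon set
    intro hsid
    have h := hsid tE mem1 (δ * t'E) mem2' (δ * tE) mem2 t'E mem1'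
      htE0 (mul_ne_zero hδ0 ht'E0) (mul_ne_zero hδ0 htE0) ht'E0 (by ring)
    have hmem : qcoset K tE ∈ ({qcoset K (δ * tE), qcoset K t'E} : Set (Set E)) := by
      rw [← h]; exact Set.mem_insert _ _
    rcases hmem with hc | hc
    · -- qcoset tE = qcoset (δ tE): δ ∈ K ⊆ L, contradiction
      have : δ * tE ∈ qcoset K tE := by
        rw [hc]; exact ⟨1, by simp⟩
      obtain ⟨x, hx⟩ := this
      have : algebraMap K E x = δ := mul_right_cancel₀ htE0 hx
      exact hδL ⟨algebraMap K L x, by rw [← hKE, this]⟩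
    · -- qcoset tE = qcoset t'E: α ∈ K, contradiction
      have hc : qcoset K tE = qcoset K t'E := hc
      have : t'E ∈ qcoset K tE := by
        rw [hc]; exact ⟨1, by simp⟩
      obtain ⟨x, hx⟩ := this
      have hx' : algebraMap K L x * t = t' := by
        apply injLE
        rw [map_mul, ← hKE]; exact hx
      have hx0 : x ≠ 0 := by
        rintro rfl; simp at hx'; exact ht'0 hx'.symm
      have : α * (algebraMap K L x) * t = t := by
        rw [mul_assoc, hx', ht'eq]
      have hαx : α * algebraMap K L x = 1 :=
        mul_right_cancel₀ ht0 (by rw [this, one_mul])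
      exact hα ⟨x⁻¹, by rw [map_inv₀]; exact inv_eq_of_mul_eq_one_left hαx⟩
  · refine ⟨α, hα, ?_⟩
    have hu : tE ∈ W ⊓ W.map (LinearMap.mulLeft K (algebraMap L E α)) := ⟨mem1, memm1⟩
    have hw : δ * tE ∈ W ⊓ W.map (LinearMap.mulLeft K (algebraMap L E α)) := ⟨mem2, memm2⟩
    set P := W ⊓ W.map (LinearMap.mulLeft K (algebraMap L E α)) with hP
    have hli : LinearIndependent K ![(⟨tE, hu⟩ : P), ⟨δ * tE, hw⟩] := by
      rw [LinearIndependent.pair_iff]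
      intro s r hsr
      have h0 : s • tE + r • (δ * tE) = 0 := by
        have := congrArg (Subtype.val) hsr
        simpa using this
      have h1 : (algebraMap K E s + algebraMap K E r * δ) * tE = 0 := by
        rw [add_mul]
        rw [Algebra.smul_def, Algebra.smul_def] at h0
        rw [← h0]; ring
      have h2 : algebraMap K E s + algebraMap K E r * δ = 0 :=
        by rcases mul_eq_zero.mp h1 with h | h
           · exact h
           · exact absurd h htE0
      have hr : r = 0 := by
        by_contra hr0
        apply hδL
        refine ⟨algebraMap K L (-s / r), ?_⟩
        rw [← hKE, map_div₀, map_neg]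
        have hrE : algebraMap K E r ≠ 0 := fun h =>
          hr0 ((algebraMap K E).injective (by simpa using h))
        field_simp
        linear_combination -h2
      subst hr
      simp at h2
      have hs : s = 0 := (algebraMap K E).injective (by simpa using h2)
      exact ⟨hs, rfl⟩
    have := hli.fintype_card_le_finrank
    simpa using this
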